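/- Let (a_k)_{k≥1} be real numbers with γ² := ∑_{k=1}^∞ a_k/k ∈ (0,∞) and ∑_{k=1}^∞ |a_k|/k < ∞. For n ∈ ℕ set α = γ n^{-1/2} and E_n := ∑_{k=1}^∞ k a_k S_2(kα), where S_2(t) = e^{-t}(1-e^{-t})^{-2}. Then E_n / n → 1 as n → ∞. -/

import Mathlib

open Filter

lemma phi_bound {t : ℝ} (ht : 0 < t) :
    t ^ 2 * (Real.exp (-t) / (1 - Real.exp (-t)) ^ 2) ≤ 1 := by
  have h1 : Real.exp (-t) < 1 := Real.exp_lt_one_iff.mpr (by linarith)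
  have hd : 0 < 1 - Real.exp (-t) := by linarith
  -- key: t * exp(-(t/2)) ≤ 1 - exp(-t)
  have hsinh : t / 2 ≤ Real.sinh (t / 2) := Real.self_le_sinh_iff.mpr (by linarith)
  have hhalf : 0 < Real.exp (-(t / 2)) := Real.exp_pos _
  have hmul : Real.exp (-(t / 2)) * Real.exp (-(t / 2)) = Real.exp (-t) := by
    rw [← Real.exp_add]; ring_nf
  have hmul2 : Real.exp (t / 2) * Real.exp (-(t / 2)) = 1 := by
    rw [← Real.exp_add]; simp
  have hkey : t * Real.exp (-(t / 2)) ≤ 1 - Real.exp (-t) := by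
    rw [Real.sinh_eq] at hsinh
    nlinarith [hhalf]
  have hsq : t ^ 2 * Real.exp (-t) ≤ (1 - Real.exp (-t)) ^ 2 := by
    nlinarith [mul_pos ht hhalf, hkey, hmul]
  rw [mul_div_assoc'] at *
  exact div_le_one_of_le₀ hsq (by positivity)

lemma phi_tendsto :
    Tendsto (fun t : ℝ => t ^ 2 * (Real.exp (-t) / (1 - Real.exp (-t)) ^ 2))
      (nhdsWithin 0 (Set.Ioi 0)) (nhds 1) := by
  have hderiv : HasDerivAt (fun x : ℝ => 1 - Real.exp (-x)) 1 0 := by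
    have h := ((Real.hasDerivAt_exp (-(0:ℝ))).comp 0 (hasDerivAt_neg 0)).const_sub 1
    simpa using h
  have hslope : Tendsto (fun t : ℝ => (1 - Real.exp (-t)) / t)
      (nhdsWithin 0 {(0:ℝ)}ᶜ) (nhds 1) := by
    have h := hasDerivAt_iff_tendsto_slope.mp hderiv
    refine h.congr fun t => ?_
    simp [slope_def_field, div_eq_inv_mul]
  have hslope' : Tendsto (fun t : ℝ => (1 - Real.exp (-t)) / t)
      (nhdsWithin 0 (Set.Ioi 0)) (nhds 1) :=
    hslope.mono_left (nhdsWithin_mono _ fun x hx => ne_of_gt hx)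
  have hinv : Tendsto (fun t : ℝ => t / (1 - Real.exp (-t)))
      (nhdsWithin 0 (Set.Ioi 0)) (nhds 1) := by
    have h := hslope'.inv₀ one_ne_zero
    simpa [inv_div] using h
  have hexp : Tendsto (fun t : ℝ => Real.exp (-t)) (nhdsWithin 0 (Set.Ioi 0)) (nhds 1) := by
    have : Tendsto (fun t : ℝ => Real.exp (-t)) (nhds 0) (nhds 1) := by
      have := (Real.continuous_exp.comp continuous_neg).tendsto 0
      simpa [Function.comp_def] using this
    exact this.mono_left nhdsWithin_le_nhds
  have h := hexp.mul (hinv.pow 2)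
  rw [show (1:ℝ) = 1 * 1 ^ 2 by norm_num]
  refine h.congr fun t => ?_
  rw [div_pow]
  ring

lemma sqrt_nat_tendsto : Tendsto (fun n : ℕ => Real.sqrt n) atTop atTop := by
  apply tendsto_atTop_atTop.mpr
  intro b
  refine ⟨⌈(b ^ 2 : ℝ)⌉₊, fun n hn => ?_⟩
  have h1 : (b ^ 2 : ℝ) ≤ n := le_trans (Nat.le_ceil _) (by exact_mod_cast hn)
  calc b ≤ |b| := le_abs_self b
    _ = Real.sqrt (b ^ 2) := (Real.sqrt_sq_eq_abs b).symm
    _ ≤ Real.sqrt n := Real.sqrt_le_sqrt h1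

theorem stmt_9 (a : ℕ → ℝ) (γ : ℝ) (hγ : 0 < γ)
    (hsum : Summable (fun k : ℕ => |a (k + 1)| / (k + 1)))
    (hγ2 : γ ^ 2 = ∑' k : ℕ, a (k + 1) / (k + 1)) :
    Tendsto
      (fun n : ℕ =>
        (∑' k : ℕ, ((k : ℝ) + 1) * a (k + 1) *
            (Real.exp (-(((k : ℝ) + 1) * (γ / Real.sqrt n))) /
              (1 - Real.exp (-(((k : ℝ) + 1) * (γ / Real.sqrt n)))) ^ 2)) / (n : ℝ))
      atTop (nhds 1) := by
  have hγ0 : γ ≠ 0 := ne_of_gt hγ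
  set φ : ℝ → ℝ := fun t => t ^ 2 * (Real.exp (-t) / (1 - Real.exp (-t)) ^ 2) with hφ
  set f : ℕ → ℕ → ℝ := fun n k =>
    a (k + 1) / (k + 1) * φ (((k : ℝ) + 1) * (γ / Real.sqrt n)) / γ ^ 2 with hf
  -- t_{n,k} → 0 within Ioi 0
  have htk : ∀ k : ℕ, Tendsto (fun n : ℕ => ((k : ℝ) + 1) * (γ / Real.sqrt n)) atTop
      (nhdsWithin 0 (Set.Ioi 0)) := by
    intro k
    rw [tendsto_nhdsWithin_iff]
    constructor
    · have hinv : Tendsto (fun n : ℕ => (Real.sqrt n)⁻¹) atTop (nhds 0) :=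
        tendsto_inv_atTop_zero.comp sqrt_nat_tendsto
      have h := (hinv.const_mul γ).const_mul ((k : ℝ) + 1)
      simpa [div_eq_mul_inv] using h
    · filter_upwards [eventually_ge_atTop 1] with n hn
      have hs : 0 < Real.sqrt n := Real.sqrt_pos.mpr (by exact_mod_cast hn)
      have : (0:ℝ) < (k : ℝ) + 1 := by positivity
      exact Set.mem_Ioi.mpr (by positivity)
  -- dominated convergence
  have hg : Tendsto (fun n : ℕ => ∑' k, f n k) atTop
      (nhds (∑' k : ℕ, a (k + 1) / (k + 1) * 1 / γ ^ 2)) := by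
    apply tendsto_tsum_of_dominated_convergence
      (bound := fun k : ℕ => |a (k + 1)| / (k + 1) / γ ^ 2)
    · exact hsum.div_const _
    · intro k
      exact ((phi_tendsto.comp (htk k)).const_mul _).div_const _
    · filter_upwards [eventually_ge_atTop 1] with n hn
      intro k
      have hs : 0 < Real.sqrt n := Real.sqrt_pos.mpr (by exact_mod_cast hn)
      have hk1 : (0:ℝ) < (k : ℝ) + 1 := by positivity
      have htpos : 0 < ((k : ℝ) + 1) * (γ / Real.sqrt n) := by positivity
      have h1 : φ (((k : ℝ) + 1) * (γ / Real.sqrt n)) ≤ 1 := phi_bound htpos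
      have h0 : 0 ≤ φ (((k : ℝ) + 1) * (γ / Real.sqrt n)) := by
        have he : Real.exp (-(((k : ℝ) + 1) * (γ / Real.sqrt n))) < 1 :=
          Real.exp_lt_one_iff.mpr (by linarith)
        positivity
      have : ‖f n k‖ = |a (k + 1)| / (k + 1) * φ (((k : ℝ) + 1) * (γ / Real.sqrt n)) / γ ^ 2 := by
        rw [hf]
        rw [Real.norm_eq_abs, abs_div, abs_mul, abs_div, abs_of_pos hk1,
          abs_of_nonneg h0, abs_of_pos (by positivity : (0:ℝ) < γ ^ 2)]
      rw [this]
      apply div_le_div_of_nonneg_right ?_ (by positivity)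
      calc |a (k + 1)| / ((k : ℝ) + 1) * φ (((k : ℝ) + 1) * (γ / Real.sqrt n))
          ≤ |a (k + 1)| / ((k : ℝ) + 1) * 1 :=
            mul_le_mul_of_nonneg_left h1 (by positivity)
        _ = |a (k + 1)| / ((k : ℝ) + 1) := mul_one _
  -- the limit value is 1
  have hval : (∑' k : ℕ, a (k + 1) / (k + 1) * 1 / γ ^ 2) = 1 := by
    simp_rw [mul_one]
    rw [tsum_div_const, ← hγ2, div_self (by positivity)]
  rw [hval] at hg
  -- eventual equality with the original expression
  refine hg.congr' ?_
  filter_upwards [eventually_ge_atTop 1] with n hn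
  have hs : 0 < Real.sqrt n := Real.sqrt_pos.mpr (by exact_mod_cast hn)
  have hn0 : (0:ℝ) < n := by exact_mod_cast hn
  rw [← tsum_div_const]
  congr 1
  funext k
  have hk1 : (0:ℝ) < (k : ℝ) + 1 := by positivity
  have ht2 : (((k : ℝ) + 1) * (γ / Real.sqrt n)) ^ 2 = ((k : ℝ) + 1) ^ 2 * γ ^ 2 / n := by
    rw [mul_pow, div_pow, Real.sq_sqrt (Nat.cast_nonneg n)]; ring
  rw [hf, hφ]
  simp only []
  rw [ht2]
  generalize (Real.exp (-(((k : ℝ) + 1) * (γ / Real.sqrt n))) /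
      (1 - Real.exp (-(((k : ℝ) + 1) * (γ / Real.sqrt n)))) ^ 2) = r
  field_simp
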